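/- arXiv:1906.04776 — 2 statements merged into one kernel-verified Lean document; each statement's English description precedes it below -/
import Mathlib

section
/- Assume N ≥ 4. Let R := Σ_{1≤s<t≤K} a_{st} be the total number of cross-matched pairs under a uniformly random labeling L. Set G₁ := Σ_{1≤s<t≤K} N_sN_t and G₂ := (1/2)·Σ_{s=1}^K N_s(N−N_s)(N−N_s−1). Then E[R] = G₁/(N−1) and Var(R) = (G₁/(N−1))·(1 − G₁/(N−1)) + (G₁² − G₁ − 2G₂)/((N−1)(N−3)). -/
open Finset Filter MeasureTheory ProbabilityTheory Topology

namespace Crossmatch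

/-- First endpoint (index `2j`, i.e., the paper's `2j-1` in 1-based indexing) of the `j`-th
matched pair in the fixed perfect matching on `{1, …, 2I}`. -/
def ep1 {I : ℕ} (j : Fin I) : Fin (2 * I) := ⟨2 * j.val, by have := j.isLt; omega⟩

/-- Second endpoint (index `2j+1`, i.e., the paper's `2j`) of the `j`-th matched pair. -/
def ep2 {I : ℕ} (j : Fin I) : Fin (2 * I) := ⟨2 * j.val + 1, by have := j.isLt; omega⟩

/-- The set of labelings `L : {1,…,2I} → {1,…,K}` assigning label `s` to exactly `Nc s`
indices, for every `s`. -/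
def labelings (I K : ℕ) (Nc : Fin K → ℕ) : Finset (Fin (2 * I) → Fin K) :=
  univ.filter fun L => ∀ s : Fin K, (univ.filter fun i => L i = s).card = Nc s

/-- The count `a_{st}(L)`: the number of matched pairs `j` with `{L(2j-1), L(2j)} = {s,t}`.
For `s ≠ t` this is the cross-count; for `s = t` it is the pure count (both endpoints labeled
`s`). -/
def crossCount (I K : ℕ) (L : Fin (2 * I) → Fin K) (s t : Fin K) : ℕ :=
  (univ.filter fun j : Fin I =>
    ({L (ep1 j), L (ep2 j)} : Finset (Fin K)) = ({s, t} : Finset (Fin K))).card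

/-- Expectation of a real-valued statistic under a uniformly random labeling. -/
noncomputable def expct (I K : ℕ) (Nc : Fin K → ℕ)
    (X : (Fin (2 * I) → Fin K) → ℝ) : ℝ :=
  (∑ L ∈ labelings I K Nc, X L) / ((labelings I K Nc).card : ℝ)

open Classical in
/-- Probability of an event under a uniformly random labeling. -/
noncomputable def pr (I K : ℕ) (Nc : Fin K → ℕ)
    (ev : (Fin (2 * I) → Fin K) → Prop) : ℝ :=
  (((labelings I K Nc).filter ev).card : ℝ) / ((labelings I K Nc).card : ℝ)

/-- Variance of a real-valued statistic under a uniformly random labeling. -/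
noncomputable def variance (I K : ℕ) (Nc : Fin K → ℕ)
    (X : (Fin (2 * I) → Fin K) → ℝ) : ℝ :=
  expct I K Nc (fun L => (X L - expct I K Nc X) ^ 2)

/-- Covariance of two real-valued statistics under a uniformly random labeling. -/
noncomputable def covar (I K : ℕ) (Nc : Fin K → ℕ)
    (X Y : (Fin (2 * I) → Fin K) → ℝ) : ℝ :=
  expct I K Nc (fun L => (X L - expct I K Nc X) * (Y L - expct I K Nc Y))

/-- The index set of (unordered) pairs `s < t`, indexing the cross-count vector. -/
abbrev Pairs (K : ℕ) := {q : Fin K × Fin K // q.1 < q.2}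

/-- The covariance matrix of the cross-count vector `(a_{st})_{s<t}` under a uniformly
random labeling. -/
noncomputable def covMatrix (I K : ℕ) (Nc : Fin K → ℕ) :
    Matrix (Pairs K) (Pairs K) ℝ :=
  Matrix.of fun q r =>
    covar I K Nc (fun L => (crossCount I K L q.1.1 q.1.2 : ℝ))
      (fun L => (crossCount I K L r.1.1 r.1.2 : ℝ))

section CMHelpers

open Finset

variable {n : ℕ} {α : Type*} [DecidableEq α]

/-- indicator that two positions carry different labels -/
def ind (g : Fin n → α) (a b : Fin n) : ℝ := if g a = g b then 0 else 1

/-- Kronecker delta on indices, as a real -/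
def dd (a b : Fin n) : ℝ := if a = b then 1 else 0

lemma ind_symm (g : Fin n → α) (a b : Fin n) : ind g a b = ind g b a := by
  unfold ind
  by_cases h : g a = g b
  · rw [if_pos h, if_pos h.symm]
  · rw [if_neg h, if_neg (fun h' => h h'.symm)]

lemma ind_self (g : Fin n → α) (a : Fin n) : ind g a a = 0 := by simp [ind]

lemma ind_sq (g : Fin n → α) (a b : Fin n) : ind g a b * ind g a b = ind g a b := by
  unfold ind; split <;> ring

/-- fiber size at a position, as a real -/
noncomputable def wt (g : Fin n → α) (a : Fin n) : ℝ :=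
  ((univ.filter fun b => g b = g a).card : ℝ)

lemma sum_ind_right (g : Fin n → α) (a : Fin n) :
    ∑ b, ind g a b = (n : ℝ) - wt g a := by
  have h1 : ∀ b, ind g a b = 1 - (if g b = g a then (1:ℝ) else 0) := by
    intro b
    unfold ind
    by_cases h : g a = g b
    · rw [if_pos h, if_pos h.symm]; ring
    · rw [if_neg h, if_neg (fun h' => h h'.symm)]; ring
  rw [Finset.sum_congr rfl fun b _ => h1 b, Finset.sum_sub_distrib]
  rw [Finset.sum_boole, Finset.sum_const, Finset.card_univ, Fintype.card_fin]
  simp [wt]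

lemma collapse_left (F : Fin n → ℝ) (a : Fin n) : ∑ c, dd a c * F c = F a := by
  unfold dd
  simp [ite_mul, Finset.sum_ite_eq]

lemma collapse_right (F : Fin n → ℝ) (a : Fin n) : ∑ c, F c * dd a c = F a := by
  unfold dd
  simp [mul_ite, Finset.sum_ite_eq]

/-- row sum of the indicator -/
noncomputable def rs (g : Fin n → α) (a : Fin n) : ℝ := ∑ b, ind g a b

lemma rs_col (g : Fin n → α) (b : Fin n) : ∑ a, ind g a b = rs g b := by
  rw [rs]; exact Finset.sum_congr rfl fun a _ => ind_symm g a b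

lemma rs_eq (g : Fin n → α) (a : Fin n) : rs g a = (n : ℝ) - wt g a :=
  sum_ind_right g a

lemma bigT1 (g : Fin n → α) :
    ∑ a, ∑ b, ∑ c, ∑ d, ind g a b * ind g c d * dd a c = ∑ a, rs g a * rs g a := by
  refine Finset.sum_congr rfl fun a _ => ?_
  have h1 : ∀ b c : Fin n, ∑ d, ind g a b * ind g c d * dd a c
      = ind g a b * (dd a c * rs g c) := by
    intro b c
    rw [rs, Finset.mul_sum, Finset.mul_sum]
    exact Finset.sum_congr rfl fun d _ => by ring
  calc ∑ b, ∑ c, ∑ d, ind g a b * ind g c d * dd a c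
      = ∑ b, ∑ c, ind g a b * (dd a c * rs g c) :=
        Finset.sum_congr rfl fun b _ => Finset.sum_congr rfl fun c _ => h1 b c
    _ = ∑ b, ind g a b * (∑ c, dd a c * rs g c) := by
        exact Finset.sum_congr rfl fun b _ => (Finset.mul_sum _ _ _).symm
    _ = ∑ b, ind g a b * rs g a := by rw [collapse_left (rs g) a]
    _ = rs g a * rs g a := by rw [← Finset.sum_mul, rs]

lemma bigT2 (g : Fin n → α) :
    ∑ a, ∑ b, ∑ c, ∑ d, ind g a b * ind g c d * dd a d = ∑ a, rs g a * rs g a := by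
  refine Finset.sum_congr rfl fun a _ => ?_
  have h1 : ∀ b : Fin n, ∑ c, ∑ d, ind g a b * ind g c d * dd a d
      = ind g a b * rs g a := by
    intro b
    rw [Finset.sum_comm]
    have h2 : ∀ d, ∑ c, ind g a b * ind g c d * dd a d
        = ind g a b * (rs g d * dd a d) := by
      intro d
      rw [← rs_col g d, Finset.sum_mul, Finset.mul_sum]
      exact Finset.sum_congr rfl fun c _ => by ring
    rw [Finset.sum_congr rfl fun d _ => h2 d, ← Finset.mul_sum,
      collapse_right (rs g) a]
  calc ∑ b, ∑ c, ∑ d, ind g a b * ind g c d * dd a d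
      = ∑ b, ind g a b * rs g a := Finset.sum_congr rfl fun b _ => h1 b
    _ = rs g a * rs g a := by rw [← Finset.sum_mul, rs]

lemma bigT3 (g : Fin n → α) :
    ∑ a, ∑ b, ∑ c, ∑ d, ind g a b * ind g c d * dd b c = ∑ a, rs g a * rs g a := by
  have h1 : ∀ a b : Fin n, ∑ c, ∑ d, ind g a b * ind g c d * dd b c
      = ind g a b * rs g b := by
    intro a b
    have h2 : ∀ c, ∑ d, ind g a b * ind g c d * dd b c
        = ind g a b * (dd b c * rs g c) := by
      intro c
      rw [rs, Finset.mul_sum, Finset.mul_sum]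
      exact Finset.sum_congr rfl fun d _ => by ring
    rw [Finset.sum_congr rfl fun c _ => h2 c, ← Finset.mul_sum, collapse_left (rs g) b]
  calc ∑ a, ∑ b, ∑ c, ∑ d, ind g a b * ind g c d * dd b c
      = ∑ a, ∑ b, ind g a b * rs g b :=
        Finset.sum_congr rfl fun a _ => Finset.sum_congr rfl fun b _ => h1 a b
    _ = ∑ b, ∑ a, ind g a b * rs g b := Finset.sum_comm
    _ = ∑ b, rs g b * rs g b := by
        refine Finset.sum_congr rfl fun b _ => ?_
        rw [← Finset.sum_mul, rs_col]

lemma bigT4 (g : Fin n → α) :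
    ∑ a, ∑ b, ∑ c, ∑ d, ind g a b * ind g c d * dd b d = ∑ a, rs g a * rs g a := by
  have h1 : ∀ a b : Fin n, ∑ c, ∑ d, ind g a b * ind g c d * dd b d
      = ind g a b * rs g b := by
    intro a b
    rw [Finset.sum_comm]
    have h2 : ∀ d, ∑ c, ind g a b * ind g c d * dd b d
        = ind g a b * (rs g d * dd b d) := by
      intro d
      rw [← rs_col g d, Finset.sum_mul, Finset.mul_sum]
      exact Finset.sum_congr rfl fun c _ => by ring
    rw [Finset.sum_congr rfl fun d _ => h2 d, ← Finset.mul_sum, collapse_right (rs g) b]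
  calc ∑ a, ∑ b, ∑ c, ∑ d, ind g a b * ind g c d * dd b d
      = ∑ a, ∑ b, ind g a b * rs g b :=
        Finset.sum_congr rfl fun a _ => Finset.sum_congr rfl fun b _ => h1 a b
    _ = ∑ b, ∑ a, ind g a b * rs g b := Finset.sum_comm
    _ = ∑ b, rs g b * rs g b := by
        refine Finset.sum_congr rfl fun b _ => ?_
        rw [← Finset.sum_mul, rs_col]

lemma bigT5 (g : Fin n → α) :
    ∑ a, ∑ b, ∑ c, ∑ d, ind g a b * ind g c d * (dd a c * dd b d)
      = ∑ a, ∑ b, ind g a b := by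
  refine Finset.sum_congr rfl fun a _ => Finset.sum_congr rfl fun b _ => ?_
  have h2 : ∀ c, ∑ d, ind g a b * ind g c d * (dd a c * dd b d)
      = ind g a b * (dd a c * ind g c b) := by
    intro c
    have : ∑ d, ind g c d * dd b d = ind g c b := collapse_right (fun d => ind g c d) b
    rw [← this, Finset.mul_sum, Finset.mul_sum]
    exact Finset.sum_congr rfl fun d _ => by ring
  rw [Finset.sum_congr rfl fun c _ => h2 c, ← Finset.mul_sum,
    collapse_left (fun c => ind g c b) a, ind_sq]

lemma bigT6 (g : Fin n → α) :
    ∑ a, ∑ b, ∑ c, ∑ d, ind g a b * ind g c d * (dd a d * dd b c)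
      = ∑ a, ∑ b, ind g a b := by
  refine Finset.sum_congr rfl fun a _ => Finset.sum_congr rfl fun b _ => ?_
  have h2 : ∀ c, ∑ d, ind g a b * ind g c d * (dd a d * dd b c)
      = ind g a b * (dd b c * ind g c a) := by
    intro c
    have : ∑ d, ind g c d * dd a d = ind g c a := collapse_right (fun d => ind g c d) a
    rw [← this, Finset.mul_sum, Finset.mul_sum]
    exact Finset.sum_congr rfl fun d _ => by ring
  rw [Finset.sum_congr rfl fun c _ => h2 c, ← Finset.mul_sum,
    collapse_left (fun c => ind g c a) b, ind_symm g b a, ind_sq]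

lemma bigT0 (g : Fin n → α) :
    ∑ a, ∑ b, ∑ c, ∑ d, ind g a b * ind g c d
      = (∑ a, ∑ b, ind g a b) * (∑ a, ∑ b, ind g a b) := by
  have h : ∀ a b : Fin n, ∑ c, ∑ d, ind g a b * ind g c d
      = ind g a b * (∑ c, ∑ d, ind g c d) := by
    intro a b
    rw [Finset.mul_sum]
    exact Finset.sum_congr rfl fun c _ => (Finset.mul_sum _ _ _).symm
  calc ∑ a, ∑ b, ∑ c, ∑ d, ind g a b * ind g c d
      = ∑ a, ∑ b, ind g a b * (∑ c, ∑ d, ind g c d) :=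
        Finset.sum_congr rfl fun a _ => Finset.sum_congr rfl fun b _ => h a b
    _ = ∑ a, (∑ b, ind g a b) * (∑ c, ∑ d, ind g c d) :=
        Finset.sum_congr rfl fun a _ => (Finset.sum_mul _ _ _).symm
    _ = (∑ a, ∑ b, ind g a b) * (∑ c, ∑ d, ind g c d) := (Finset.sum_mul _ _ _).symm

lemma key_pw (g : Fin n → α) (a b c d : Fin n) :
    ind g a b * ind g c d *
      ((1 - dd a c) * (1 - dd a d) * (1 - dd b c) * (1 - dd b d))
    = ind g a b * ind g c d *
        (1 - dd a c - dd a d - dd b c - dd b d + dd a c * dd b d + dd a d * dd b c) := by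
  by_cases hab : g a = g b
  · simp [ind, hab]
  by_cases hcd : g c = g d
  · simp [ind, hcd]
  have hab' : a ≠ b := fun h => hab (by rw [h])
  have hcd' : c ≠ d := fun h => hcd (by rw [h])
  unfold dd
  split_ifs <;> try ring1
  all_goals (exfalso; subst_vars; simp_all)

lemma bigSum (g : Fin n → α) :
    ∑ a, ∑ b, ∑ c, ∑ d, ind g a b * ind g c d *
        ((1 - dd a c) * (1 - dd a d) * (1 - dd b c) * (1 - dd b d))
      = (∑ a, ∑ b, ind g a b) * (∑ a, ∑ b, ind g a b)
        - 4 * (∑ a, rs g a * rs g a) + 2 * (∑ a, ∑ b, ind g a b) := by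
  have hpw : ∀ a b c d : Fin n, ind g a b * ind g c d *
        ((1 - dd a c) * (1 - dd a d) * (1 - dd b c) * (1 - dd b d))
      = ind g a b * ind g c d
        - ind g a b * ind g c d * dd a c
        - ind g a b * ind g c d * dd a d
        - ind g a b * ind g c d * dd b c
        - ind g a b * ind g c d * dd b d
        + ind g a b * ind g c d * (dd a c * dd b d)
        + ind g a b * ind g c d * (dd a d * dd b c) := by
    intro a b c d
    rw [key_pw]
    ring
  calc ∑ a, ∑ b, ∑ c, ∑ d, ind g a b * ind g c d *
        ((1 - dd a c) * (1 - dd a d) * (1 - dd b c) * (1 - dd b d))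
      = ∑ a, ∑ b, ∑ c, ∑ d, (ind g a b * ind g c d
        - ind g a b * ind g c d * dd a c
        - ind g a b * ind g c d * dd a d
        - ind g a b * ind g c d * dd b c
        - ind g a b * ind g c d * dd b d
        + ind g a b * ind g c d * (dd a c * dd b d)
        + ind g a b * ind g c d * (dd a d * dd b c)) := by
        exact Finset.sum_congr rfl fun a _ => Finset.sum_congr rfl fun b _ =>
          Finset.sum_congr rfl fun c _ => Finset.sum_congr rfl fun d _ => hpw a b c d
    _ = (∑ a, ∑ b, ∑ c, ∑ d, ind g a b * ind g c d)
        - (∑ a, ∑ b, ∑ c, ∑ d, ind g a b * ind g c d * dd a c)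
        - (∑ a, ∑ b, ∑ c, ∑ d, ind g a b * ind g c d * dd a d)
        - (∑ a, ∑ b, ∑ c, ∑ d, ind g a b * ind g c d * dd b c)
        - (∑ a, ∑ b, ∑ c, ∑ d, ind g a b * ind g c d * dd b d)
        + (∑ a, ∑ b, ∑ c, ∑ d, ind g a b * ind g c d * (dd a c * dd b d))
        + (∑ a, ∑ b, ∑ c, ∑ d, ind g a b * ind g c d * (dd a d * dd b c)) := by
        simp only [Finset.sum_add_distrib, Finset.sum_sub_distrib]
    _ = (∑ a, ∑ b, ind g a b) * (∑ a, ∑ b, ind g a b)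
        - 4 * (∑ a, rs g a * rs g a) + 2 * (∑ a, ∑ b, ind g a b) := by
        rw [bigT0, bigT1, bigT2, bigT3, bigT4, bigT5, bigT6]
        ring

/-- any two injections `Fin m ↪ Fin N` are related by a permutation -/
lemma exists_perm_extend {m N : ℕ} (g₁ g₂ : Fin m → Fin N)
    (h₁ : Function.Injective g₁) (h₂ : Function.Injective g₂) :
    ∃ σ : Equiv.Perm (Fin N), ∀ i, σ (g₁ i) = g₂ i := by
  classical
  have hc : Fintype.card ((Set.range g₁)ᶜ : Set (Fin N))
      = Fintype.card ((Set.range g₂)ᶜ : Set (Fin N)) := by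
    rw [Fintype.card_compl_set, Fintype.card_compl_set,
      Set.card_range_of_injective h₁, Set.card_range_of_injective h₂]
  let e₁ := Equiv.ofInjective g₁ h₁
  let e₂ := Equiv.ofInjective g₂ h₂
  let ec := Fintype.equivOfCardEq hc
  refine ⟨(Equiv.Set.sumCompl (Set.range g₁)).symm.trans
    (((e₁.symm.trans e₂).sumCongr ec).trans (Equiv.Set.sumCompl (Set.range g₂))), ?_⟩
  intro i
  simp only [Equiv.trans_apply]
  rw [Equiv.Set.sumCompl_symm_apply_of_mem (Set.mem_range_self i)]
  simp [e₁, e₂, Equiv.ofInjective_symm_apply, Equiv.ofInjective_apply]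

lemma finset_pair_eq {β : Type*} [DecidableEq β] {x y a b : β} :
    ({x, y} : Finset β) = {a, b} ↔ (x = a ∧ y = b) ∨ (x = b ∧ y = a) := by
  rw [← Finset.coe_inj]
  simp only [Finset.coe_insert, Finset.coe_singleton]
  exact Set.pair_eq_pair_iff

end CMHelpers

section CMHelpers2

variable {I K : ℕ} {Nc : Fin K → ℕ}

lemma mem_labelings {L : Fin (2 * I) → Fin K} :
    L ∈ labelings I K Nc ↔ ∀ s : Fin K, (univ.filter fun i => L i = s).card = Nc s := by
  simp [labelings]

lemma comp_perm_mem (σ : Equiv.Perm (Fin (2 * I))) {L : Fin (2 * I) → Fin K}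
    (h : L ∈ labelings I K Nc) : L ∘ σ ∈ labelings I K Nc := by
  rw [mem_labelings] at h ⊢
  intro s
  rw [← h s]
  have : (univ.filter fun i => L (σ i) = s)
      = (univ.filter fun i => L i = s).map σ.symm.toEmbedding := by
    ext i
    simp only [Finset.mem_filter, Finset.mem_map, Finset.mem_univ, true_and,
      Equiv.coe_toEmbedding]
    constructor
    · intro hi; exact ⟨σ i, hi, σ.symm_apply_apply i⟩
    · rintro ⟨j, hj, rfl⟩; simpa using hj
  simp only [Function.comp]
  rw [this, Finset.card_map]

lemma sum_labelings_comp (σ : Equiv.Perm (Fin (2 * I)))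
    (F : (Fin (2 * I) → Fin K) → ℝ) :
    ∑ L ∈ labelings I K Nc, F (L ∘ σ) = ∑ L ∈ labelings I K Nc, F L := by
  refine Finset.sum_nbij' (fun L => L ∘ σ) (fun L => L ∘ σ.symm) ?_ ?_ ?_ ?_ ?_
  · exact fun L hL => comp_perm_mem σ hL
  · exact fun L hL => comp_perm_mem σ.symm hL
  · intro L _; funext i; simp
  · intro L _; funext i; simp
  · intro L _; rfl

lemma labelings_nonempty (hNsum : ∑ s, Nc s = 2 * I) :
    (labelings I K Nc).Nonempty := by
  have hcard : Fintype.card (Σ s : Fin K, Fin (Nc s)) = Fintype.card (Fin (2 * I)) := by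
    simp [Fintype.card_sigma, hNsum]
  let e : (Σ s : Fin K, Fin (Nc s)) ≃ Fin (2 * I) := Fintype.equivOfCardEq hcard
  refine ⟨fun i => (e.symm i).1, ?_⟩
  rw [mem_labelings]
  intro s
  have himg : (univ.filter fun i => (e.symm i).1 = s)
      = Finset.image (fun x : Fin (Nc s) => e ⟨s, x⟩) univ := by
    ext i
    simp only [Finset.mem_filter, Finset.mem_univ, true_and, Finset.mem_image]
    constructor
    · intro h
      rcases h' : e.symm i with ⟨t, x⟩
      rw [h'] at h
      subst h
      exact ⟨x, by rw [← h', Equiv.apply_symm_apply]⟩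
    · rintro ⟨x, rfl⟩
      simp
  rw [himg, Finset.card_image_of_injective _ (fun x y hxy => by
    have := e.injective hxy
    simpa using this)]
  simp

lemma sum_cross_ind (x y : Fin K) :
    ∑ q ∈ univ.filter (fun q : Fin K × Fin K => q.1 < q.2),
      (if ({x, y} : Finset (Fin K)) = {q.1, q.2} then (1:ℝ) else 0)
    = if x = y then 0 else 1 := by
  by_cases hxy : x = y
  · rw [if_pos hxy]
    refine Finset.sum_eq_zero fun q hq => ?_
    rw [Finset.mem_filter] at hq
    rw [if_neg]
    intro h
    rcases finset_pair_eq.mp h with ⟨h1, h2⟩ | ⟨h1, h2⟩ <;>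
      (subst hxy; exact absurd (by rw [← h1, ← h2] : q.1 = q.2) (ne_of_lt hq.2))
  · rw [if_neg hxy]
    rcases (lt_trichotomy x y).elim Or.inl (fun h => h.elim (fun e => absurd e hxy) Or.inr) with hlt | hlt
    · have hset : ((univ.filter (fun q : Fin K × Fin K => q.1 < q.2)).filter
          (fun q => ({x, y} : Finset (Fin K)) = {q.1, q.2})) = {(x, y)} := by
        ext q
        simp only [Finset.mem_filter, Finset.mem_univ, true_and, Finset.mem_singleton]
        constructor
        · rintro ⟨hq, hpair⟩
          rcases finset_pair_eq.mp hpair with ⟨h1, h2⟩ | ⟨h1, h2⟩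
          · exact Prod.ext h1.symm h2.symm
          · subst h1; subst h2; exact absurd hq (asymm hlt)
        · rintro rfl
          exact ⟨hlt, rfl⟩
      rw [← Finset.sum_filter, hset, Finset.sum_singleton]
    · have hset : ((univ.filter (fun q : Fin K × Fin K => q.1 < q.2)).filter
          (fun q => ({x, y} : Finset (Fin K)) = {q.1, q.2})) = {(y, x)} := by
        ext q
        simp only [Finset.mem_filter, Finset.mem_univ, true_and, Finset.mem_singleton]
        constructor
        · rintro ⟨hq, hpair⟩
          rcases finset_pair_eq.mp hpair with ⟨h1, h2⟩ | ⟨h1, h2⟩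
          · subst h1; subst h2; exact absurd hq (asymm hlt)
          · exact Prod.ext h2.symm h1.symm
        · rintro rfl
          exact ⟨hlt, finset_pair_eq.mpr (Or.inr ⟨rfl, rfl⟩)⟩
      rw [← Finset.sum_filter, hset, Finset.sum_singleton]

lemma R_as_ind (L : Fin (2 * I) → Fin K) :
    ∑ q ∈ univ.filter (fun q : Fin K × Fin K => q.1 < q.2),
        (crossCount I K L q.1 q.2 : ℝ)
    = ∑ j : Fin I, ind L (ep1 j) (ep2 j) := by
  have hcc : ∀ s t : Fin K, (crossCount I K L s t : ℝ)
      = ∑ j : Fin I, (if ({L (ep1 j), L (ep2 j)} : Finset (Fin K)) = {s, t}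
          then (1:ℝ) else 0) := by
    intro s t
    rw [crossCount, Finset.sum_boole]
  calc ∑ q ∈ univ.filter (fun q : Fin K × Fin K => q.1 < q.2),
        (crossCount I K L q.1 q.2 : ℝ)
      = ∑ q ∈ univ.filter (fun q : Fin K × Fin K => q.1 < q.2), ∑ j : Fin I,
          (if ({L (ep1 j), L (ep2 j)} : Finset (Fin K)) = {q.1, q.2}
            then (1:ℝ) else 0) :=
        Finset.sum_congr rfl fun q _ => hcc q.1 q.2
    _ = ∑ j : Fin I, ∑ q ∈ univ.filter (fun q : Fin K × Fin K => q.1 < q.2),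
          (if ({L (ep1 j), L (ep2 j)} : Finset (Fin K)) = {q.1, q.2}
            then (1:ℝ) else 0) := Finset.sum_comm
    _ = ∑ j : Fin I, ind L (ep1 j) (ep2 j) :=
        Finset.sum_congr rfl fun j _ => sum_cross_ind _ _

lemma sum_comp_labeling {L : Fin (2 * I) → Fin K} (hL : L ∈ labelings I K Nc)
    (F : Fin K → ℝ) :
    ∑ a, F (L a) = ∑ s, (Nc s : ℝ) * F s := by
  rw [← Finset.sum_fiberwise_of_maps_to' (fun i _ => Finset.mem_univ (L i)) F]
  refine Finset.sum_congr rfl fun s _ => ?_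
  rw [Finset.sum_const, (mem_labelings.mp hL) s, nsmul_eq_mul]

lemma wt_labeling {L : Fin (2 * I) → Fin K} (hL : L ∈ labelings I K Nc)
    (a : Fin (2 * I)) : wt L a = (Nc (L a) : ℝ) := by
  rw [wt, (mem_labelings.mp hL) (L a)]

end CMHelpers2

section CMHelpers3

variable {I K : ℕ} {Nc : Fin K → ℕ}

lemma exists_perm_pair {N : ℕ} {a b a' b' : Fin N} (hab : a ≠ b) (hab' : a' ≠ b') :
    ∃ σ : Equiv.Perm (Fin N), σ a = a' ∧ σ b = b' := by
  have h₁ : Function.Injective ![a, b] := by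
    intro i j hij
    fin_cases i <;> fin_cases j <;> simp_all
  have h₂ : Function.Injective ![a', b'] := by
    intro i j hij
    fin_cases i <;> fin_cases j <;> simp_all
  obtain ⟨σ, hσ⟩ := exists_perm_extend ![a, b] ![a', b'] h₁ h₂
  exact ⟨σ, hσ 0, hσ 1⟩

lemma exists_perm_quad {N : ℕ} {a b c d a' b' c' d' : Fin N}
    (h1 : a ≠ b) (h2 : a ≠ c) (h3 : a ≠ d) (h4 : b ≠ c) (h5 : b ≠ d) (h6 : c ≠ d)
    (h1' : a' ≠ b') (h2' : a' ≠ c') (h3' : a' ≠ d') (h4' : b' ≠ c') (h5' : b' ≠ d')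
    (h6' : c' ≠ d') :
    ∃ σ : Equiv.Perm (Fin N), σ a = a' ∧ σ b = b' ∧ σ c = c' ∧ σ d = d' := by
  have hi₁ : Function.Injective ![a, b, c, d] := by
    intro i j hij
    fin_cases i <;> fin_cases j <;> simp_all
  have hi₂ : Function.Injective ![a', b', c', d'] := by
    intro i j hij
    fin_cases i <;> fin_cases j <;> simp_all
  obtain ⟨σ, hσ⟩ := exists_perm_extend ![a, b, c, d] ![a', b', c', d'] hi₁ hi₂
  exact ⟨σ, hσ 0, hσ 1, hσ 2, hσ 3⟩

lemma sum_ind_const {a b a' b' : Fin (2 * I)} (hab : a ≠ b) (hab' : a' ≠ b') :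
    ∑ L ∈ labelings I K Nc, ind L a' b' = ∑ L ∈ labelings I K Nc, ind L a b := by
  obtain ⟨σ, hs1, hs2⟩ := exists_perm_pair hab hab'
  have hpt : ∀ L : Fin (2 * I) → Fin K, ind (L ∘ σ) a b = ind L a' b' := by
    intro L
    show ind L (σ a) (σ b) = ind L a' b'
    rw [hs1, hs2]
  calc ∑ L ∈ labelings I K Nc, ind L a' b'
      = ∑ L ∈ labelings I K Nc, ind (L ∘ σ) a b :=
        Finset.sum_congr rfl fun L _ => (hpt L).symm
    _ = ∑ L ∈ labelings I K Nc, ind L a b :=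
        sum_labelings_comp σ (fun L => ind L a b)

lemma sum_ind2_const {a b c d a' b' c' d' : Fin (2 * I)}
    (h1 : a ≠ b) (h2 : a ≠ c) (h3 : a ≠ d) (h4 : b ≠ c) (h5 : b ≠ d) (h6 : c ≠ d)
    (h1' : a' ≠ b') (h2' : a' ≠ c') (h3' : a' ≠ d') (h4' : b' ≠ c') (h5' : b' ≠ d')
    (h6' : c' ≠ d') :
    ∑ L ∈ labelings I K Nc, ind L a' b' * ind L c' d'
      = ∑ L ∈ labelings I K Nc, ind L a b * ind L c d := by
  obtain ⟨σ, hs1, hs2, hs3, hs4⟩ :=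
    exists_perm_quad h1 h2 h3 h4 h5 h6 h1' h2' h3' h4' h5' h6'
  have hpt : ∀ L : Fin (2 * I) → Fin K,
      ind (L ∘ σ) a b * ind (L ∘ σ) c d = ind L a' b' * ind L c' d' := by
    intro L
    show ind L (σ a) (σ b) * ind L (σ c) (σ d) = _
    rw [hs1, hs2, hs3, hs4]
  calc ∑ L ∈ labelings I K Nc, ind L a' b' * ind L c' d'
      = ∑ L ∈ labelings I K Nc, ind (L ∘ σ) a b * ind (L ∘ σ) c d :=
        Finset.sum_congr rfl fun L _ => (hpt L).symm
    _ = ∑ L ∈ labelings I K Nc, ind L a b * ind L c d :=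
        sum_labelings_comp σ (fun L => ind L a b * ind L c d)

lemma variance_formula (X : (Fin (2 * I) → Fin K) → ℝ)
    (h : (labelings I K Nc).Nonempty) :
    variance I K Nc X
      = (∑ L ∈ labelings I K Nc, X L ^ 2) / ((labelings I K Nc).card : ℝ)
        - (expct I K Nc X) ^ 2 := by
  have hm : ((labelings I K Nc).card : ℝ) ≠ 0 := by
    exact Nat.cast_ne_zero.mpr (Finset.card_pos.mpr h).ne'
  set m : ℝ := ((labelings I K Nc).card : ℝ) with hmdef
  set μ : ℝ := expct I K Nc X with hμdef
  have hsum : ∑ L ∈ labelings I K Nc, X L = m * μ := by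
    rw [hμdef, expct]
    field_simp
    rw [hmdef]
  have hexp : ∑ L ∈ labelings I K Nc, (X L - μ) ^ 2
      = (∑ L ∈ labelings I K Nc, X L ^ 2) - m * μ ^ 2 := by
    have : ∀ L, (X L - μ) ^ 2 = X L ^ 2 - 2 * μ * X L + μ ^ 2 := fun L => by ring
    rw [Finset.sum_congr rfl fun L _ => this L]
    rw [Finset.sum_add_distrib, Finset.sum_sub_distrib, ← Finset.mul_sum, hsum,
      Finset.sum_const, nsmul_eq_mul]
    rw [hmdef]
    ring
  rw [variance, expct, hexp, sub_div, mul_comm m (μ ^ 2), mul_div_assoc,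
    div_self hm, mul_one]

end CMHelpers3


set_option maxHeartbeats 1600000 in
/-- null mean and variance of the multisample crossmatch statistic
`R = Σ_{s<t} a_{st}`. -/
theorem stmt9 (K I : ℕ) (hK : 2 ≤ K) (hI : 1 ≤ I) (hN : 4 ≤ 2 * I)
    (Nc : Fin K → ℕ) (hNpos : ∀ s, 0 < Nc s) (hNsum : ∑ s, Nc s = 2 * I)
    (R : (Fin (2 * I) → Fin K) → ℝ)
    (hR : ∀ L, R L = ∑ q ∈ univ.filter (fun q : Fin K × Fin K => q.1 < q.2),
        (crossCount I K L q.1 q.2 : ℝ))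
    (G₁ G₂ : ℝ)
    (hG₁ : G₁ = ∑ q ∈ univ.filter (fun q : Fin K × Fin K => q.1 < q.2),
        (Nc q.1 : ℝ) * (Nc q.2 : ℝ))
    (hG₂ : G₂ = (1 / 2) * ∑ s, (Nc s : ℝ) * ((2 * I : ℝ) - (Nc s : ℝ))
        * ((2 * I : ℝ) - (Nc s : ℝ) - 1)) :
    expct I K Nc R = G₁ / ((2 * I : ℝ) - 1)
    ∧ variance I K Nc R
        = (G₁ / ((2 * I : ℝ) - 1)) * (1 - G₁ / ((2 * I : ℝ) - 1))
          + (G₁ ^ 2 - G₁ - 2 * G₂) / (((2 * I : ℝ) - 1) * ((2 * I : ℝ) - 3)) := by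
  classical
  have hI2 : 2 ≤ I := by omega
  set Ω := labelings I K Nc with hΩdef
  have hne : Ω.Nonempty := labelings_nonempty hNsum
  have hm0 : ((Ω.card : ℝ)) ≠ 0 := Nat.cast_ne_zero.mpr (Finset.card_pos.mpr hne).ne'
  set m : ℝ := (Ω.card : ℝ) with hmdef
  -- the real number N = 2I
  have hIR : (2:ℝ) ≤ (I:ℝ) := by exact_mod_cast hI2
  have hcastN : ((2 * I : ℕ) : ℝ) = 2 * (I:ℝ) := by push_cast; ring
  -- basic nonvanishing
  have hn0 : (2 * (I:ℝ)) ≠ 0 := by nlinarith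
  have hn1 : (2 * (I:ℝ) - 1) ≠ 0 := by nlinarith
  have hn2 : (2 * (I:ℝ) - 2) ≠ 0 := by nlinarith
  have hn3 : (2 * (I:ℝ) - 3) ≠ 0 := by nlinarith
  ------------------------------------------------------------------
  -- Step 1 : combinatorial identities about Nc
  ------------------------------------------------------------------
  have hNcsum : ∑ s, (Nc s : ℝ) = 2 * (I:ℝ) := by
    rw [← Nat.cast_sum, hNsum, hcastN]
  have hG1sum : ∑ s, (Nc s : ℝ) * (2 * (I:ℝ) - (Nc s : ℝ)) = 2 * G₁ := by
    have htot : ∑ s, ∑ t, (Nc s : ℝ) * (Nc t : ℝ) = (2*(I:ℝ)) * (2*(I:ℝ)) := by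
      rw [← Finset.sum_mul_sum, hNcsum]
    have hprod : ∑ q : Fin K × Fin K, (Nc q.1 : ℝ) * (Nc q.2 : ℝ)
        = ∑ s, ∑ t, (Nc s : ℝ) * (Nc t : ℝ) := Fintype.sum_prod_type _
    have hsplit1 : ∑ q : Fin K × Fin K, (Nc q.1 : ℝ) * (Nc q.2 : ℝ)
        = (∑ q ∈ univ.filter (fun q : Fin K × Fin K => q.1 < q.2),
            (Nc q.1 : ℝ) * (Nc q.2 : ℝ))
          + ∑ q ∈ univ.filter (fun q : Fin K × Fin K => ¬ q.1 < q.2),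
            (Nc q.1 : ℝ) * (Nc q.2 : ℝ) :=
      (Finset.sum_filter_add_sum_filter_not univ _ _).symm
    have hsplit2 : ∑ q ∈ univ.filter (fun q : Fin K × Fin K => ¬ q.1 < q.2),
          (Nc q.1 : ℝ) * (Nc q.2 : ℝ)
        = (∑ q ∈ (univ.filter (fun q : Fin K × Fin K => ¬ q.1 < q.2)).filter
            (fun q => q.2 < q.1), (Nc q.1 : ℝ) * (Nc q.2 : ℝ))
          + ∑ q ∈ (univ.filter (fun q : Fin K × Fin K => ¬ q.1 < q.2)).filter
            (fun q => ¬ q.2 < q.1), (Nc q.1 : ℝ) * (Nc q.2 : ℝ) :=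
      (Finset.sum_filter_add_sum_filter_not _ _ _).symm
    have he1 : (univ.filter (fun q : Fin K × Fin K => ¬ q.1 < q.2)).filter
          (fun q => q.2 < q.1)
        = univ.filter (fun q : Fin K × Fin K => q.2 < q.1) := by
      rw [Finset.filter_filter]
      refine Finset.filter_congr fun q _ => ?_
      constructor
      · rintro ⟨-, h⟩; exact h
      · intro h; exact ⟨asymm h, h⟩
    have hswap : ∑ q ∈ univ.filter (fun q : Fin K × Fin K => q.2 < q.1),
          (Nc q.1 : ℝ) * (Nc q.2 : ℝ)
        = ∑ q ∈ univ.filter (fun q : Fin K × Fin K => q.1 < q.2),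
          (Nc q.1 : ℝ) * (Nc q.2 : ℝ) := by
      refine Finset.sum_nbij' (fun q => q.swap) (fun q => q.swap) ?_ ?_ ?_ ?_ ?_
      · intro q hq; simp only [Finset.mem_filter, Finset.mem_univ, true_and] at hq ⊢
        exact hq
      · intro q hq; simp only [Finset.mem_filter, Finset.mem_univ, true_and] at hq ⊢
        exact hq
      · intro q _; rfl
      · intro q _; rfl
      · intro q _; exact (mul_comm _ _)
    have hdiag : ∑ q ∈ (univ.filter (fun q : Fin K × Fin K => ¬ q.1 < q.2)).filter
          (fun q => ¬ q.2 < q.1), (Nc q.1 : ℝ) * (Nc q.2 : ℝ)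
        = ∑ s : Fin K, (Nc s : ℝ) * (Nc s : ℝ) := by
      refine Finset.sum_nbij' (fun q => q.1) (fun s => (s, s)) ?_ ?_ ?_ ?_ ?_
      · intro q _; exact Finset.mem_univ _
      · intro s _; simp
      · intro q hq
        simp only [Finset.mem_filter] at hq
        have h12 : q.1 = q.2 := le_antisymm (not_lt.mp hq.2) (not_lt.mp hq.1.2)
        exact Prod.ext rfl h12
      · intro s _; rfl
      · intro q hq
        simp only [Finset.mem_filter] at hq
        have h12 : q.1 = q.2 := le_antisymm (not_lt.mp hq.2) (not_lt.mp hq.1.2)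
        rw [← h12]
    have hkey : (2*(I:ℝ)) * (2*(I:ℝ))
        = 2 * G₁ + ∑ s : Fin K, (Nc s : ℝ) * (Nc s : ℝ) := by
      rw [← htot, ← hprod, hsplit1, hsplit2, he1, hswap, hdiag, hG₁]
      ring
    have hexpand : ∑ s, (Nc s : ℝ) * (2 * (I:ℝ) - (Nc s : ℝ))
        = 2*(I:ℝ) * ∑ s, (Nc s : ℝ) - ∑ s : Fin K, (Nc s : ℝ) * (Nc s : ℝ) := by
      rw [Finset.mul_sum, ← Finset.sum_sub_distrib]
      exact Finset.sum_congr rfl fun s _ => by ring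
    rw [hexpand, hNcsum]
    linarith
  have hG2sum : ∑ s, (Nc s : ℝ) * ((2*(I:ℝ)) - (Nc s : ℝ)) * ((2*(I:ℝ)) - (Nc s : ℝ))
      = 2 * G₂ + 2 * G₁ := by
    have h1 : ∑ s, (Nc s : ℝ) * ((2 * (I:ℝ)) - (Nc s : ℝ)) * ((2 * (I:ℝ)) - (Nc s:ℝ) - 1)
        = ∑ s, ((Nc s : ℝ) * ((2*(I:ℝ)) - (Nc s : ℝ)) * ((2*(I:ℝ)) - (Nc s : ℝ))
            - (Nc s : ℝ) * ((2*(I:ℝ)) - (Nc s : ℝ))) :=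
      Finset.sum_congr rfl fun s _ => by ring
    have h2 : G₂ = (1/2) * ∑ s, ((Nc s : ℝ) * ((2*(I:ℝ)) - (Nc s : ℝ)) * ((2*(I:ℝ)) - (Nc s : ℝ))
        - (Nc s : ℝ) * ((2*(I:ℝ)) - (Nc s : ℝ))) := by
      rw [hG₂, ← h1]
    rw [Finset.sum_sub_distrib, hG1sum] at h2
    linarith
  ------------------------------------------------------------------
  -- Step 2 : per-labeling sums
  ------------------------------------------------------------------
  have hA : ∀ L ∈ Ω, ∑ a, ∑ b, ind L a b = 2 * G₁ := by
    intro L hL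
    have h1 : ∀ a, ∑ b, ind L a b = (2*(I:ℝ)) - (Nc (L a) : ℝ) := by
      intro a
      rw [sum_ind_right, wt_labeling hL, hcastN]
    rw [Finset.sum_congr rfl fun a _ => h1 a,
      sum_comp_labeling hL (fun s => (2*(I:ℝ)) - (Nc s : ℝ))]
    rw [← hG1sum]
  have hQ : ∀ L ∈ Ω, ∑ a, rs L a * rs L a = 2 * G₂ + 2 * G₁ := by
    intro L hL
    have h1 : ∀ a, rs L a = (2*(I:ℝ)) - (Nc (L a) : ℝ) := by
      intro a
      rw [rs_eq, wt_labeling hL, hcastN]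
    have h2 : ∀ a, rs L a * rs L a
        = (fun s => ((2*(I:ℝ)) - (Nc s : ℝ)) * ((2*(I:ℝ)) - (Nc s : ℝ))) (L a) := by
      intro a; rw [h1]
    rw [Finset.sum_congr rfl fun a _ => h2 a,
      sum_comp_labeling hL (fun s => ((2*(I:ℝ)) - (Nc s : ℝ)) * ((2*(I:ℝ)) - (Nc s : ℝ)))]
    rw [← hG2sum]
    exact Finset.sum_congr rfl fun s _ => by ring
  -- per-labeling fourth-order sum
  set MM : ℝ := (2*G₁) * (2*G₁) - 4 * (2*G₂ + 2*G₁) + 2 * (2*G₁) with hMMdef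
  have hMsum : ∀ L ∈ Ω, ∑ a, ∑ b, ∑ c, ∑ d, ind L a b * ind L c d *
        ((1 - dd a c) * (1 - dd a d) * (1 - dd b c) * (1 - dd b d)) = MM := by
    intro L hL
    rw [bigSum, hA L hL, hQ L hL]
  ------------------------------------------------------------------
  -- Step 3 : the identity labeling and the quadruple count
  ------------------------------------------------------------------
  set idf : Fin (2*I) → Fin (2*I) := fun x => x with hidf
  have hwtid : ∀ a, wt idf a = 1 := by
    intro a
    rw [wt]
    simp [hidf, Finset.filter_eq']
  have hAid : ∑ a, ∑ b, ind idf a b = (2*(I:ℝ)) * (2*(I:ℝ) - 1) := by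
    have h1 : ∀ a : Fin (2*I), ∑ b, ind idf a b = (2*(I:ℝ)) - 1 := by
      intro a; rw [sum_ind_right, hwtid, hcastN]
    rw [Finset.sum_congr rfl fun a _ => h1 a, Finset.sum_const, Finset.card_univ,
      Fintype.card_fin, nsmul_eq_mul, hcastN]
  have hQid : ∑ a, rs idf a * rs idf a = (2*(I:ℝ)) * ((2*(I:ℝ) - 1) * (2*(I:ℝ) - 1)) := by
    have h1 : ∀ a : Fin (2*I), rs idf a * rs idf a = (2*(I:ℝ) - 1) * (2*(I:ℝ) - 1) := by
      intro a; rw [rs_eq, hwtid, hcastN]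
    rw [Finset.sum_congr rfl fun a _ => h1 a, Finset.sum_const, Finset.card_univ,
      Fintype.card_fin, nsmul_eq_mul, hcastN]
  set DD : ℝ := (2*(I:ℝ)) * (2*(I:ℝ) - 1) * ((2*(I:ℝ)) * (2*(I:ℝ) - 1))
      - 4 * ((2*(I:ℝ)) * ((2*(I:ℝ) - 1) * (2*(I:ℝ) - 1)))
      + 2 * ((2*(I:ℝ)) * (2*(I:ℝ) - 1)) with hDDdef
  have hDid : ∑ a, ∑ b, ∑ c, ∑ d, ind idf a b * ind idf c d *
        ((1 - dd a c) * (1 - dd a d) * (1 - dd b c) * (1 - dd b d)) = DD := by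
    rw [bigSum, hAid, hQid]
  have hDDval : DD = (2*(I:ℝ)) * (2*(I:ℝ) - 1) * (2*(I:ℝ) - 2) * (2*(I:ℝ) - 3) := by
    rw [hDDdef]; ring
  have hDD0 : DD ≠ 0 := by
    rw [hDDval]
    exact mul_ne_zero (mul_ne_zero (mul_ne_zero hn0 hn1) hn2) hn3
  ------------------------------------------------------------------
  -- Step 4 : reference pairs and constancy
  ------------------------------------------------------------------
  have hj0 : (0:ℕ) < I := by omega
  have hj1 : (1:ℕ) < I := by omega
  set j₀ : Fin I := ⟨0, hj0⟩ with hj₀def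
  set j₁ : Fin I := ⟨1, hj1⟩ with hj₁def
  have hep12 : ∀ j : Fin I, ep1 j ≠ ep2 j := by
    intro j h
    have := congrArg Fin.val h
    simp only [ep1, ep2] at this
    omega
  have hep_ne : ∀ j j' : Fin I, j ≠ j' →
      ep1 j ≠ ep1 j' ∧ ep1 j ≠ ep2 j' ∧ ep2 j ≠ ep1 j' ∧ ep2 j ≠ ep2 j' := by
    intro j j' hjj'
    have hv : j.val ≠ j'.val := fun h => hjj' (Fin.ext h)
    refine ⟨?_, ?_, ?_, ?_⟩ <;>
      (intro h; have := congrArg Fin.val h; simp only [ep1, ep2] at this; omega)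
  set c₀ : ℝ := ∑ L ∈ Ω, ind L (ep1 j₀) (ep2 j₀) with hc₀def
  set c₄ : ℝ := ∑ L ∈ Ω, ind L (ep1 j₀) (ep2 j₀) * ind L (ep1 j₁) (ep2 j₁) with hc₄def
  have hc0 : ∀ a b : Fin (2*I), a ≠ b → ∑ L ∈ Ω, ind L a b = c₀ := by
    intro a b hab
    exact sum_ind_const (hep12 j₀) hab
  have hj01 : j₀ ≠ j₁ := by
    intro h; rw [hj₀def, hj₁def] at h; exact absurd (congrArg Fin.val h) (by simp)
  have hrefq := hep_ne j₀ j₁ hj01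
  have hc4 : ∀ a b c d : Fin (2*I), a ≠ b → a ≠ c → a ≠ d → b ≠ c → b ≠ d → c ≠ d →
      ∑ L ∈ Ω, ind L a b * ind L c d = c₄ := by
    intro a b c d h1 h2 h3 h4 h5 h6
    exact sum_ind2_const (hep12 j₀) hrefq.1 hrefq.2.1 hrefq.2.2.1 hrefq.2.2.2 (hep12 j₁)
      h1 h2 h3 h4 h5 h6
  ------------------------------------------------------------------
  -- Step 5 : equation for c₀
  ------------------------------------------------------------------
  have hc0eq : (2*(I:ℝ)) * (2*(I:ℝ) - 1) * c₀ = m * (2 * G₁) := by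
    have hLHS : ∑ a, ∑ b, ∑ L ∈ Ω, ind L a b = ∑ L ∈ Ω, ∑ a, ∑ b, ind L a b := by
      calc ∑ a, ∑ b, ∑ L ∈ Ω, ind L a b
          = ∑ a, ∑ L ∈ Ω, ∑ b, ind L a b :=
            Finset.sum_congr rfl fun a _ => Finset.sum_comm
        _ = ∑ L ∈ Ω, ∑ a, ∑ b, ind L a b := Finset.sum_comm
    have hR1 : ∑ L ∈ Ω, ∑ a, ∑ b, ind L a b = m * (2*G₁) := by
      rw [Finset.sum_congr rfl hA, Finset.sum_const, nsmul_eq_mul, hmdef]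
    have hR2 : ∑ a, ∑ b, ∑ L ∈ Ω, ind L a b = (2*(I:ℝ)) * ((2*(I:ℝ)) * c₀ - c₀) := by
      have hinner : ∀ a : Fin (2*I), ∑ b, ∑ L ∈ Ω, ind L a b = (2*(I:ℝ)) * c₀ - c₀ := by
        intro a
        have hpt : ∀ b, ∑ L ∈ Ω, ind L a b = c₀ - (if a = b then c₀ else 0) := by
          intro b
          by_cases hab : a = b
          · subst hab
            rw [if_pos rfl]
            simp [ind_self]
          · rw [if_neg hab, hc0 a b hab]; ring
        rw [Finset.sum_congr rfl fun b _ => hpt b, Finset.sum_sub_distrib,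
          Finset.sum_const, Finset.card_univ, Fintype.card_fin, nsmul_eq_mul,
          Fintype.sum_ite_eq a (fun _ => c₀), hcastN]
      rw [Finset.sum_congr rfl fun a _ => hinner a, Finset.sum_const, Finset.card_univ,
        Fintype.card_fin, nsmul_eq_mul, hcastN]
    have := hLHS.symm.trans hR2
    rw [hR1] at this
    linarith [this]
  ------------------------------------------------------------------
  -- Step 6 : equation for c₄
  ------------------------------------------------------------------
  have hc4eq : DD * c₄ = m * MM := by
    have hpoint : ∀ a b c d : Fin (2*I),
        (ind idf a b * ind idf c d *
          ((1 - dd a c) * (1 - dd a d) * (1 - dd b c) * (1 - dd b d))) * c₄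
        = ∑ L ∈ Ω, ind L a b * ind L c d *
          ((1 - dd a c) * (1 - dd a d) * (1 - dd b c) * (1 - dd b d)) := by
      intro a b c d
      by_cases hac : a = c
      · subst hac; simp [dd]
      by_cases had : a = d
      · subst had; simp [dd]
      by_cases hbc : b = c
      · subst hbc; simp [dd]
      by_cases hbd : b = d
      · subst hbd; simp [dd]
      by_cases hab : a = b
      · subst hab
        have : ind idf a a = 0 := ind_self idf a
        simp [this, ind_self]
      by_cases hcd : c = d
      · subst hcd
        have : ind idf c c = 0 := ind_self idf c
        simp [this, ind_self]
      -- all distinct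
      have hiab : ind idf a b = 1 := by rw [ind, if_neg]; exact hab
      have hicd : ind idf c d = 1 := by rw [ind, if_neg]; exact hcd
      have hprod1 : ((1 - dd a c) * (1 - dd a d) * (1 - dd b c) * (1 - dd b d)) = 1 := by
        rw [dd, dd, dd, dd, if_neg hac, if_neg had, if_neg hbc, if_neg hbd]
        ring
      have hsumr : ∑ L ∈ Ω, ind L a b * ind L c d *
            ((1 - dd a c) * (1 - dd a d) * (1 - dd b c) * (1 - dd b d))
          = c₄ := by
        rw [← hc4 a b c d hab hac had hbc hbd hcd]
        exact Finset.sum_congr rfl fun L _ => by rw [hprod1, mul_one]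
      rw [hsumr, hiab, hicd, hprod1]
      ring
    -- sum both sides
    have hLHS : ∑ a, ∑ b, ∑ c, ∑ d, (ind idf a b * ind idf c d *
          ((1 - dd a c) * (1 - dd a d) * (1 - dd b c) * (1 - dd b d))) * c₄
        = DD * c₄ := by
      rw [← hDid]
      simp only [Finset.sum_mul]
    have hRHS : ∑ a, ∑ b, ∑ c, ∑ d, ∑ L ∈ Ω, ind L a b * ind L c d *
          ((1 - dd a c) * (1 - dd a d) * (1 - dd b c) * (1 - dd b d))
        = m * MM := by
      have hswap : ∑ a, ∑ b, ∑ c, ∑ d, ∑ L ∈ Ω, ind L a b * ind L c d *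
            ((1 - dd a c) * (1 - dd a d) * (1 - dd b c) * (1 - dd b d))
          = ∑ L ∈ Ω, ∑ a, ∑ b, ∑ c, ∑ d, ind L a b * ind L c d *
            ((1 - dd a c) * (1 - dd a d) * (1 - dd b c) * (1 - dd b d)) := by
        calc ∑ a, ∑ b, ∑ c, ∑ d, ∑ L ∈ Ω, ind L a b * ind L c d *
              ((1 - dd a c) * (1 - dd a d) * (1 - dd b c) * (1 - dd b d))
            = ∑ a, ∑ b, ∑ c, ∑ L ∈ Ω, ∑ d, ind L a b * ind L c d *
              ((1 - dd a c) * (1 - dd a d) * (1 - dd b c) * (1 - dd b d)) :=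
              Finset.sum_congr rfl fun a _ => Finset.sum_congr rfl fun b _ =>
                Finset.sum_congr rfl fun c _ => Finset.sum_comm
          _ = ∑ a, ∑ b, ∑ L ∈ Ω, ∑ c, ∑ d, ind L a b * ind L c d *
              ((1 - dd a c) * (1 - dd a d) * (1 - dd b c) * (1 - dd b d)) :=
              Finset.sum_congr rfl fun a _ => Finset.sum_congr rfl fun b _ =>
                Finset.sum_comm
          _ = ∑ a, ∑ L ∈ Ω, ∑ b, ∑ c, ∑ d, ind L a b * ind L c d *
              ((1 - dd a c) * (1 - dd a d) * (1 - dd b c) * (1 - dd b d)) :=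
              Finset.sum_congr rfl fun a _ => Finset.sum_comm
          _ = ∑ L ∈ Ω, ∑ a, ∑ b, ∑ c, ∑ d, ind L a b * ind L c d *
              ((1 - dd a c) * (1 - dd a d) * (1 - dd b c) * (1 - dd b d)) :=
              Finset.sum_comm
      rw [hswap, Finset.sum_congr rfl hMsum, Finset.sum_const, nsmul_eq_mul, hmdef]
    rw [← hLHS, ← hRHS]
    exact Finset.sum_congr rfl fun a _ => Finset.sum_congr rfl fun b _ =>
      Finset.sum_congr rfl fun c _ => Finset.sum_congr rfl fun d _ => hpoint a b c d
  ------------------------------------------------------------------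
  -- Step 7 : sums of R and R²
  ------------------------------------------------------------------
  have hRind : ∀ L, R L = ∑ j : Fin I, ind L (ep1 j) (ep2 j) := by
    intro L
    rw [hR, R_as_ind]
  have hRsum : ∑ L ∈ Ω, R L = (I:ℝ) * c₀ := by
    rw [Finset.sum_congr rfl fun L _ => hRind L, Finset.sum_comm]
    rw [Finset.sum_congr rfl fun j (_ : j ∈ univ) => hc0 (ep1 j) (ep2 j) (hep12 j)]
    rw [Finset.sum_const, Finset.card_univ, Fintype.card_fin, nsmul_eq_mul]
  have hR2sum : ∑ L ∈ Ω, R L ^ 2 = (I:ℝ) * ((I:ℝ) * c₄ + c₀ - c₄) := by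
    have hsq : ∀ L, R L ^ 2 = ∑ j : Fin I, ∑ j' : Fin I,
        ind L (ep1 j) (ep2 j) * ind L (ep1 j') (ep2 j') := by
      intro L
      rw [hRind, sq, Finset.sum_mul_sum]
    rw [Finset.sum_congr rfl fun L _ => hsq L]
    have hswap : ∑ L ∈ Ω, ∑ j : Fin I, ∑ j' : Fin I,
          ind L (ep1 j) (ep2 j) * ind L (ep1 j') (ep2 j')
        = ∑ j : Fin I, ∑ j' : Fin I, ∑ L ∈ Ω,
          ind L (ep1 j) (ep2 j) * ind L (ep1 j') (ep2 j') := by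
      rw [Finset.sum_comm]
      exact Finset.sum_congr rfl fun j _ => Finset.sum_comm
    rw [hswap]
    have hpair : ∀ j j' : Fin I, ∑ L ∈ Ω,
        ind L (ep1 j) (ep2 j) * ind L (ep1 j') (ep2 j')
        = if j = j' then c₀ else c₄ := by
      intro j j'
      by_cases hjj' : j = j'
      · subst hjj'
        rw [if_pos rfl, ← hc0 (ep1 j) (ep2 j) (hep12 j)]
        exact Finset.sum_congr rfl fun L _ => ind_sq L _ _
      · rw [if_neg hjj']
        obtain ⟨d1, d2, d3, d4⟩ := hep_ne j j' hjj'
        exact hc4 _ _ _ _ (hep12 j) d1 d2 d3 d4 (hep12 j')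
    rw [Finset.sum_congr rfl fun j _ => Finset.sum_congr rfl fun j' _ => hpair j j']
    have hinner : ∀ j : Fin I, ∑ j' : Fin I, (if j = j' then c₀ else c₄)
        = (I:ℝ) * c₄ + c₀ - c₄ := by
      intro j
      have hpt : ∀ j' : Fin I, (if j = j' then c₀ else c₄)
          = c₄ + (if j = j' then c₀ - c₄ else 0) := by
        intro j'; split <;> ring
      rw [Finset.sum_congr rfl fun j' _ => hpt j', Finset.sum_add_distrib,
        Finset.sum_const, Finset.card_univ, Fintype.card_fin, nsmul_eq_mul,
        Fintype.sum_ite_eq j (fun _ => c₀ - c₄)]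
      ring
    rw [Finset.sum_congr rfl fun j _ => hinner j, Finset.sum_const, Finset.card_univ,
      Fintype.card_fin, nsmul_eq_mul]
  ------------------------------------------------------------------
  -- Step 8 : conclusion
  ------------------------------------------------------------------
  have hc0' : c₀ = m * (2 * G₁) / ((2*(I:ℝ)) * (2*(I:ℝ) - 1)) := by
    rw [eq_div_iff (mul_ne_zero hn0 hn1)]
    linarith [hc0eq]
  have hc4' : c₄ = m * MM / DD := by
    rw [eq_div_iff hDD0]
    linarith [hc4eq]
  have hmean : expct I K Nc R = G₁ / ((2 * I : ℝ) - 1) := by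
    rw [expct, ← hΩdef, hRsum, ← hmdef, hc0']
    push_cast
    field_simp
  refine ⟨hmean, ?_⟩
  rw [variance_formula R hne, ← hΩdef, hR2sum, ← hmdef, hmean, hc4', hc0', hDDval, hMMdef]
  push_cast
  have hI1 : (I:ℝ) - 1 ≠ 0 := by nlinarith
  have hI3 : (I:ℝ) * 2 - 3 ≠ 0 := by nlinarith
  have hI5 : (I:ℝ) * 2 - 1 ≠ 0 := by nlinarith
  field_simp
  ring


end Crossmatch
end

section
/- Assume that every class size N_s is a positive even integer. Then the covariance matrix of the cross-count vector Ā := (a_{st})_{1≤s<t≤K} ∈ ℝ^{K(K−1)/2} under the uniform labeling distribution is invertible (equivalently, positive definite). -/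
open Finset Filter MeasureTheory ProbabilityTheory Topology

namespace Crossmatch

-- helper lemmas
lemma ep1_ne_ep2 {I : ℕ} (j j' : Fin I) : ep1 j ≠ ep2 j' := by
  intro h
  have := congrArg Fin.val h
  simp only [ep1, ep2] at this
  omega

lemma ep2_inj {I : ℕ} {j j' : Fin I} (h : ep2 j = ep2 j') : j = j' := by
  have := congrArg Fin.val h
  simp only [ep2] at this
  exact Fin.ext (by omega)

lemma pair_eq_iff {K : ℕ} {s t u v : Fin K} (hst : s < t) (huv : u < v) :
    ({s, t} : Finset (Fin K)) = {u, v} ↔ s = u ∧ t = v := by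
  constructor
  · intro h
    have h' : ({s, t} : Set (Fin K)) = {u, v} := by
      have := congrArg (fun w : Finset (Fin K) => (↑w : Set (Fin K))) h
      simpa using this
    rcases Set.pair_eq_pair_iff.mp h' with ⟨h1, h2⟩ | ⟨h1, h2⟩
    · exact ⟨h1, h2⟩
    · subst h1; subst h2; exact absurd (hst.trans huv) (lt_irrefl _)
  · rintro ⟨rfl, rfl⟩; rfl

lemma singleton_ne_pair {K : ℕ} {a u v : Fin K} (huv : u ≠ v) :
    ({a, a} : Finset (Fin K)) ≠ {u, v} := by
  intro h
  have h1 : ({a, a} : Finset (Fin K)).card = 1 := by simp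
  have h2 : ({u, v} : Finset (Fin K)).card = 2 := Finset.card_pair huv
  rw [h, h2] at h1
  omega

lemma comp_mem_labelings {I K : ℕ} {Nc : Fin K → ℕ} (σ : Equiv.Perm (Fin (2 * I)))
    {L : Fin (2 * I) → Fin K} (hL : L ∈ labelings I K Nc) :
    (fun i => L (σ i)) ∈ labelings I K Nc := by
  simp only [labelings, mem_filter, mem_univ, true_and] at *
  intro s
  rw [← hL s]
  exact Finset.card_equiv σ (fun i => by simp)

lemma exists_base (K I : ℕ) (Nc : Fin K → ℕ) (hNpos : ∀ s, 0 < Nc s)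
    (hNeven : ∀ s, Even (Nc s)) (hNsum : ∑ s, Nc s = 2 * I) :
    ∃ L0 ∈ labelings I K Nc,
      (∀ q : Pairs K, crossCount I K L0 q.1.1 q.1.2 = 0) ∧
      ∀ q : Pairs K, ∃ L1 ∈ labelings I K Nc,
        ∀ r : Pairs K, crossCount I K L1 r.1.1 r.1.2 = (if r = q then 2 else 0) := by
  classical
  set m : Fin K → ℕ := fun s => Nc s / 2 with hm
  have hm2 : ∀ s, Nc s = 2 * m s := by
    intro s; obtain ⟨c, hc⟩ := hNeven s; simp only [hm]; omega
  have hmpos : ∀ s, 0 < m s := fun s => by have := hNpos s; have := hm2 s; omega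
  have hmsum : ∑ s, m s = I := by
    have : ∑ s, Nc s = ∑ s, 2 * m s := Finset.sum_congr rfl fun s _ => hm2 s
    rw [← Finset.mul_sum] at this; omega
  have hcard : Fintype.card (Σ s : Fin K, Fin (m s)) = Fintype.card (Fin I) := by
    simp [Fintype.card_sigma, hmsum]
  have e := Fintype.equivOfCardEq hcard
  set M : Fin I → Fin K := fun j => (e.symm j).1 with hMdef
  have hMfib : ∀ s, (univ.filter fun j => M j = s).card = m s := by
    intro s
    rw [← Fintype.card_subtype]
    have e3 : {p : (s' : Fin K) × Fin (m s') // p.1 = s} ≃ Fin (m s) :=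
      { toFun := fun p => Fin.cast (congrArg m p.2) p.1.2
        invFun := fun b => ⟨⟨s, b⟩, rfl⟩
        left_inv := by
          rintro ⟨⟨s', b⟩, h⟩
          subst h
          rfl
        right_inv := fun b => rfl }
    have e2 : {j : Fin I // M j = s} ≃ Fin (m s) :=
      (Equiv.subtypeEquiv e.symm fun j => Iff.rfl).trans e3
    rw [Fintype.card_congr e2, Fintype.card_fin]
  -- base labeling
  set L0 : Fin (2 * I) → Fin K :=
    fun i => M ⟨i.val / 2, by have := i.isLt; omega⟩ with hL0def
  have hL0ep1 : ∀ j, L0 (ep1 j) = M j := by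
    intro j
    simp only [hL0def, ep1]
    congr 1
    exact Fin.ext (show 2 * j.val / 2 = j.val by omega)
  have hL0ep2 : ∀ j, L0 (ep2 j) = M j := by
    intro j
    simp only [hL0def, ep2]
    congr 1
    exact Fin.ext (show (2 * j.val + 1) / 2 = j.val by omega)
  have hL0mem : L0 ∈ labelings I K Nc := by
    simp only [labelings, mem_filter, mem_univ, true_and]
    intro s
    have hbij : (univ.filter fun i => L0 i = s).card
        = (((univ : Finset (Fin 2)) ×ˢ (univ.filter fun j => M j = s))).card := by
      apply Finset.card_nbij'
        (i := fun i => (⟨i.val % 2, by omega⟩, ⟨i.val / 2, by have := i.isLt; omega⟩))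
        (j := fun p => ⟨2 * p.2.val + p.1.val, by have := p.2.isLt; have := p.1.isLt; omega⟩)
      · intro a ha
        simp only [Finset.mem_coe, mem_filter, mem_univ, true_and, Finset.mem_product] at *
        exact ha
      · intro p hp
        simp only [Finset.mem_coe, mem_filter, mem_univ, true_and, Finset.mem_product] at hp ⊢
        have h1 : p.1.val < 2 := p.1.isLt
        simp only [hL0def]
        rw [← hp]
        congr 1
        exact Fin.ext (show (2 * p.2.val + p.1.val) / 2 = p.2.val by omega)
      · intro a ha
        exact Fin.ext (show 2 * (a.val / 2) + a.val % 2 = a.val by omega)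
      · intro p hp
        have h1 : p.1.val < 2 := p.1.isLt
        refine Prod.ext (Fin.ext ?_) (Fin.ext ?_)
        · show (2 * p.2.val + p.1.val) % 2 = p.1.val; omega
        · show (2 * p.2.val + p.1.val) / 2 = p.2.val; omega
    rw [hbij, Finset.card_product, hMfib, hm2 s]
    simp [mul_comm]
  refine ⟨L0, hL0mem, ?_, ?_⟩
  · intro q
    simp only [crossCount, Finset.card_eq_zero]
    rw [Finset.filter_eq_empty_iff]
    intro j _
    rw [hL0ep1, hL0ep2]
    exact singleton_ne_pair (ne_of_lt q.2)
  · rintro ⟨⟨s, t⟩, hst⟩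
    simp only at hst
    -- pick monochromatic pairs of colors s and t
    have hs : 0 < (univ.filter fun j => M j = s).card := by rw [hMfib]; exact hmpos s
    have ht : 0 < (univ.filter fun j => M j = t).card := by rw [hMfib]; exact hmpos t
    obtain ⟨js, hjs⟩ := Finset.card_pos.mp hs
    obtain ⟨jt, hjt⟩ := Finset.card_pos.mp ht
    rw [mem_filter] at hjs hjt
    have hMjs : M js = s := hjs.2
    have hMjt : M jt = t := hjt.2
    have hne : js ≠ jt := by
      intro h; rw [h, hMjt] at hMjs; exact absurd hMjs.symm (ne_of_lt hst)
    set σ : Equiv.Perm (Fin (2 * I)) := Equiv.swap (ep2 js) (ep2 jt) with hσ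
    set L1 : Fin (2 * I) → Fin K := fun i => L0 (σ i) with hL1def
    have hepne : ep2 js ≠ ep2 jt := fun h => hne (ep2_inj h)
    have hL1ep1 : ∀ j, L1 (ep1 j) = M j := by
      intro j
      simp only [hL1def, hσ]
      rw [Equiv.swap_apply_of_ne_of_ne (ep1_ne_ep2 j js) (ep1_ne_ep2 j jt)]
      exact hL0ep1 j
    have hL1js : L1 (ep2 js) = t := by
      simp only [hL1def, hσ]
      rw [Equiv.swap_apply_left]
      rw [hL0ep2]; exact hMjt
    have hL1jt : L1 (ep2 jt) = s := by
      simp only [hL1def, hσ]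
      rw [Equiv.swap_apply_right]
      rw [hL0ep2]; exact hMjs
    have hL1other : ∀ j, j ≠ js → j ≠ jt → L1 (ep2 j) = M j := by
      intro j h1 h2
      simp only [hL1def, hσ]
      rw [Equiv.swap_apply_of_ne_of_ne (fun h => h1 (ep2_inj h)) (fun h => h2 (ep2_inj h))]
      exact hL0ep2 j
    refine ⟨L1, comp_mem_labelings σ hL0mem, ?_⟩
    rintro ⟨⟨u, v⟩, huv⟩
    simp only at huv
    by_cases hr : (⟨(u, v), huv⟩ : Pairs K) = ⟨(s, t), hst⟩
    · rw [if_pos hr]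
      have huvst : u = s ∧ v = t := by
        have := congrArg (fun p : Pairs K => p.1) hr
        exact ⟨congrArg Prod.fst this, congrArg Prod.snd this⟩
      obtain ⟨rfl, rfl⟩ := huvst
      show (univ.filter fun j : Fin I =>
        ({L1 (ep1 j), L1 (ep2 j)} : Finset (Fin K)) = {u, v}).card = 2
      have hfil : (univ.filter fun j : Fin I =>
          ({L1 (ep1 j), L1 (ep2 j)} : Finset (Fin K)) = {u, v}) = {js, jt} := by
        ext j
        simp only [mem_filter, mem_univ, true_and, mem_insert, mem_singleton]
        constructor
        · intro h
          by_contra hcon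
          push_neg at hcon
          rw [hL1ep1, hL1other j hcon.1 hcon.2] at h
          exact singleton_ne_pair (ne_of_lt huv) h
        · rintro (rfl | rfl)
          · rw [hL1ep1, hL1js, hMjs]
          · rw [hL1ep1, hL1jt, hMjt, Finset.pair_comm]
      show (univ.filter fun j : Fin I =>
        ({L1 (ep1 j), L1 (ep2 j)} : Finset (Fin K)) = {u, v}).card = 2
      rw [hfil]
      exact Finset.card_pair hne
    · rw [if_neg hr]
      simp only [crossCount, Finset.card_eq_zero]
      rw [Finset.filter_eq_empty_iff]
      intro j _
      by_cases h1 : j = js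
      · subst h1
        rw [hL1ep1, hL1js, hMjs]
        intro h
        rcases (pair_eq_iff hst huv).mp h with ⟨rfl, rfl⟩
        exact hr rfl
      by_cases h2 : j = jt
      · subst h2
        rw [hL1ep1, hL1jt, hMjt, Finset.pair_comm]
        intro h
        rcases (pair_eq_iff hst huv).mp h with ⟨rfl, rfl⟩
        exact hr rfl
      · rw [hL1ep1, hL1other j h1 h2]
        exact singleton_ne_pair (ne_of_lt huv)

/-- if every class size is a positive even integer, the covariance matrix of
the cross-count vector is positive definite; in particular it is invertible. -/
theorem stmt13 (K I : ℕ) (hK : 2 ≤ K) (hI : 1 ≤ I)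
    (Nc : Fin K → ℕ) (hNpos : ∀ s, 0 < Nc s) (hNeven : ∀ s, Even (Nc s))
    (hNsum : ∑ s, Nc s = 2 * I) :
    (covMatrix I K Nc).PosDef ∧ IsUnit (covMatrix I K Nc) := by
  classical
  obtain ⟨L0, hL0mem, hL0cc, hL1⟩ := exists_base K I Nc hNpos hNeven hNsum
  set S := labelings I K Nc with hS
  set n : ℝ := (S.card : ℝ) with hn
  have hScard : 0 < S.card := Finset.card_pos.mpr ⟨L0, hL0mem⟩
  have hnpos : (0 : ℝ) < n := by rw [hn]; exact_mod_cast hScard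
  set X : Pairs K → (Fin (2 * I) → Fin K) → ℝ :=
    fun q L => (crossCount I K L q.1.1 q.1.2 : ℝ) with hX
  set μ : Pairs K → ℝ := fun q => expct I K Nc (X q) with hμ
  set A : Pairs K → (Fin (2 * I) → Fin K) → ℝ := fun q L => X q L - μ q with hA
  have hcov : ∀ q r : Pairs K,
      covMatrix I K Nc q r = (∑ L ∈ S, A q L * A r L) / n := fun q r => rfl
  have hherm : (covMatrix I K Nc).IsHermitian := by
    rw [Matrix.IsHermitian]
    ext q r
    rw [Matrix.conjTranspose_apply]
    rw [hcov, hcov]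
    rw [star_trivial]
    congr 1
    exact Finset.sum_congr rfl fun L _ => mul_comm _ _
  have hposdef : (covMatrix I K Nc).PosDef := by
    refine Matrix.PosDef.of_dotProduct_mulVec_pos hherm fun x hx => ?_
    have hstar : star x = x := funext fun i => star_trivial (x i)
    have key : dotProduct (star x) ((covMatrix I K Nc).mulVec x)
        = (∑ L ∈ S, (∑ q, x q * A q L) ^ 2) / n := by
      rw [hstar]
      calc dotProduct x ((covMatrix I K Nc).mulVec x)
          = ∑ q, ∑ r, x q * ((∑ L ∈ S, A q L * A r L) / n * x r) := by
            simp only [dotProduct, Matrix.mulVec, Finset.mul_sum, hcov]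
        _ = ∑ q, ∑ r, ∑ L ∈ S, x q * (A q L * A r L / n * x r) := by
            refine Finset.sum_congr rfl fun q _ => Finset.sum_congr rfl fun r _ => ?_
            rw [Finset.sum_div, Finset.sum_mul, Finset.mul_sum]
        _ = ∑ L ∈ S, ∑ q, ∑ r, x q * (A q L * A r L / n * x r) := by
            rw [show (∑ q, ∑ r, ∑ L ∈ S, x q * (A q L * A r L / n * x r))
                = ∑ q, ∑ L ∈ S, ∑ r, x q * (A q L * A r L / n * x r) from
              Finset.sum_congr rfl fun q _ => Finset.sum_comm]
            exact Finset.sum_comm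
        _ = ∑ L ∈ S, (∑ q, x q * A q L) ^ 2 / n := by
            refine Finset.sum_congr rfl fun L _ => ?_
            rw [sq, Finset.sum_mul_sum]
            rw [Finset.sum_div]
            refine Finset.sum_congr rfl fun q _ => ?_
            rw [Finset.sum_div]
            refine Finset.sum_congr rfl fun r _ => ?_
            ring
        _ = (∑ L ∈ S, (∑ q, x q * A q L) ^ 2) / n := (Finset.sum_div _ _ _).symm
    rw [key]
    have hnonneg : ∀ L ∈ S, (0 : ℝ) ≤ (∑ q, x q * A q L) ^ 2 := fun L _ => sq_nonneg _
    rcases (Finset.sum_nonneg hnonneg).lt_or_eq with hpos | heq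
    · exact div_pos hpos hnpos
    · exfalso
      have hzero : ∀ L ∈ S, (∑ q, x q * A q L) = 0 := by
        intro L hL
        have := (Finset.sum_eq_zero_iff_of_nonneg hnonneg).mp heq.symm L hL
        exact (pow_eq_zero_iff two_ne_zero).mp this
      -- so ∑ q, x q * X q L is constant on S
      have hconst : ∀ L ∈ S, (∑ q, x q * X q L) = ∑ q, x q * μ q := by
        intro L hL
        have h := hzero L hL
        simp only [hA, mul_sub, Finset.sum_sub_distrib] at h
        linarith [h]
      apply hx
      funext q0
      obtain ⟨L1, hL1mem, hL1cc⟩ := hL1 q0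
      have h0 : (∑ q, x q * X q L0) = 0 := by
        refine Finset.sum_eq_zero fun q _ => ?_
        simp [hX, hL0cc q]
      have h1 : (∑ q, x q * X q L1) = 2 * x q0 := by
        have : ∀ q : Pairs K, x q * X q L1 = if q = q0 then 2 * x q else 0 := by
          intro q
          simp only [hX, hL1cc q]
          by_cases h : q = q0 <;> simp [h, mul_comm]
        rw [Finset.sum_congr rfl fun q _ => this q]
        simp
      have := (hconst L0 hL0mem).trans (hconst L1 hL1mem).symm
      rw [h0, h1] at this
      have : x q0 = 0 := by linarith
      simpa using this
  exact ⟨hposdef, hposdef.isUnit⟩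

end Crossmatch
end
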